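/- Let $(\psi_k) \subseteq X_1^*$ be a $p$-Bessel sequence for $X_1$ with bound $B_1$, $(\phi_k) \subseteq X_2$ a $q$-Bessel sequence for $X_2^*$ with bound $B_2$, and $m \in \ell^\infty$. Then the multiplier $\mathbf{M}_{m,(\phi_k),(\psi_k)}(f) = \sum_k m_k \psi_k(f) \phi_k$ is a well-defined bounded operator from $X_1$ to $X_2$, the series converges unconditionally for each $f \in X_1$, and $\|\mathbf{M}\|_{Op} \le B_1 B_2 \|m\|_\infty$. -/

import Mathlib

/-- The `(p,q)`-Bessel multiplier `M f = ∑ m k • ψ k (f) • φ k` of a `p`-Bessel sequence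
`(ψ k) ⊆ X₁*` (bound `B₁`), a `q`-Bessel sequence `(φ k) ⊆ X₂` for `X₂*` (bound `B₂`) and a
bounded symbol `m` is a well-defined bounded operator, the series converges unconditionally,
and `‖M‖ ≤ B₁ B₂ ‖m‖_∞`. -/
theorem multiplier_bounded {X₁ X₂ : Type*}
    [NormedAddCommGroup X₁] [NormedSpace ℝ X₁] [CompleteSpace X₁]
    [TopologicalSpace.SeparableSpace X₁]
    [NormedAddCommGroup X₂] [NormedSpace ℝ X₂] [CompleteSpace X₂]
    [TopologicalSpace.SeparableSpace X₂]
    (hrefl₁ : Function.Surjective (NormedSpace.inclusionInDoubleDual ℝ X₁))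
    (hrefl₂ : Function.Surjective (NormedSpace.inclusionInDoubleDual ℝ X₂))
    (p q B₁ B₂ : ℝ) (hp : 1 < p) (hpq : 1 / p + 1 / q = 1) (hB₁ : 0 < B₁) (hB₂ : 0 < B₂)
    (ψ : ℕ → StrongDual ℝ X₁) (φ : ℕ → X₂) (m : ℕ → ℝ)
    (hbesselψ : ∀ f : X₁, ∃ s : ℝ,
      HasSum (fun k => |ψ k f| ^ p) s ∧ s ^ (1 / p) ≤ B₁ * ‖f‖)
    (hbesselφ : ∀ h : StrongDual ℝ X₂, ∃ s : ℝ,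
      HasSum (fun k => |h (φ k)| ^ q) s ∧ s ^ (1 / q) ≤ B₂ * ‖h‖)
    (hm : BddAbove (Set.range fun k => |m k|)) :
    ∃ M : X₁ →L[ℝ] X₂,
      (∀ f : X₁, HasSum (fun k => (m k * ψ k f) • φ k) (M f)) ∧
      ‖M‖ ≤ B₁ * B₂ * ⨆ k, |m k| := by
  classical
  set C : ℝ := ⨆ k, |m k| with hC
  have hmk : ∀ k, |m k| ≤ C := fun k => le_ciSup hm k
  have hC0 : 0 ≤ C := (abs_nonneg (m 0)).trans (hmk 0)
  have hpq' : Real.HolderConjugate p q := Real.holderConjugate_iff.mpr ⟨hp, by simpa [one_div] using hpq⟩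
  have hp0 : (0 : ℝ) < p := hpq'.pos
  have hq0 : (0 : ℝ) < q := hpq'.symm.pos
  -- Key finite-sum estimate.
  have key : ∀ (f : X₁) (F : Finset ℕ),
      ‖∑ k ∈ F, (m k * ψ k f) • φ k‖ ≤ C * B₂ * (∑ k ∈ F, |ψ k f| ^ p) ^ (1 / p) := by
    intro f F
    have hSnn : 0 ≤ ∑ k ∈ F, |ψ k f| ^ p :=
      Finset.sum_nonneg fun k _ => Real.rpow_nonneg (abs_nonneg _) _
    refine NormedSpace.norm_le_dual_bound ℝ _
      (by positivity) fun h => ?_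
    have hh := hbesselφ h
    obtain ⟨s, hs, hsle⟩ := hh
    have hφF : (∑ k ∈ F, |h (φ k)| ^ q) ^ (1 / q) ≤ B₂ * ‖h‖ := by
      refine le_trans (Real.rpow_le_rpow (Finset.sum_nonneg fun k _ =>
        Real.rpow_nonneg (abs_nonneg _) _)
        (sum_le_hasSum F (fun k _ => Real.rpow_nonneg (abs_nonneg _) _) hs)
        (by positivity)) hsle
    have map : h (∑ k ∈ F, (m k * ψ k f) • φ k) = ∑ k ∈ F, (m k * ψ k f) * h (φ k) := by
      rw [map_sum]
      simp [smul_eq_mul]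
    rw [map]
    calc ‖∑ k ∈ F, (m k * ψ k f) * h (φ k)‖
        ≤ ∑ k ∈ F, |(m k * ψ k f) * h (φ k)| := by
          simpa using Finset.abs_sum_le_sum_abs (fun k => (m k * ψ k f) * h (φ k)) F
      _ ≤ ∑ k ∈ F, C * (|ψ k f| * |h (φ k)|) := by
          refine Finset.sum_le_sum fun k _ => ?_
          rw [abs_mul, abs_mul]
          have := hmk k
          have h1 : |m k| * |ψ k f| ≤ C * |ψ k f| :=
            mul_le_mul_of_nonneg_right this (abs_nonneg _)
          calc |m k| * |ψ k f| * |h (φ k)| ≤ C * |ψ k f| * |h (φ k)| :=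
                mul_le_mul_of_nonneg_right h1 (abs_nonneg _)
            _ = C * (|ψ k f| * |h (φ k)|) := by ring
      _ = C * ∑ k ∈ F, |ψ k f| * |h (φ k)| := by rw [Finset.mul_sum]
      _ ≤ C * ((∑ k ∈ F, |ψ k f| ^ p) ^ (1 / p) * (∑ k ∈ F, |h (φ k)| ^ q) ^ (1 / q)) := by
          refine mul_le_mul_of_nonneg_left ?_ hC0
          have := Real.inner_le_Lp_mul_Lq F (fun k => |ψ k f|) (fun k => |h (φ k)|) hpq'
          simpa [abs_abs] using this
      _ ≤ C * ((∑ k ∈ F, |ψ k f| ^ p) ^ (1 / p) * (B₂ * ‖h‖)) := by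
          refine mul_le_mul_of_nonneg_left (mul_le_mul_of_nonneg_left hφF ?_) hC0
          positivity
      _ = C * B₂ * (∑ k ∈ F, |ψ k f| ^ p) ^ (1 / p) * ‖h‖ := by ring
  -- Summability for each f.
  have hsum : ∀ f : X₁, Summable fun k => (m k * ψ k f) • φ k := by
    intro f
    obtain ⟨s, hs, hsle⟩ := hbesselψ f
    rw [summable_iff_vanishing_norm]
    intro ε hε
    set D : ℝ := C * B₂ + 1 with hD
    have hD0 : 0 < D := by positivity
    have hδ : (0 : ℝ) < (ε / D) ^ p := Real.rpow_pos_of_pos (by positivity) p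
    obtain ⟨F, hF⟩ := summable_iff_vanishing_norm.1 hs.summable _ hδ
    refine ⟨F, fun t ht => ?_⟩
    have htail : ∑ k ∈ t, |ψ k f| ^ p < (ε / D) ^ p := by
      have := hF t ht
      rwa [Real.norm_of_nonneg (Finset.sum_nonneg fun k _ =>
        Real.rpow_nonneg (abs_nonneg _) _)] at this
    have h1 : (∑ k ∈ t, |ψ k f| ^ p) ^ (1 / p) ≤ ((ε / D) ^ p) ^ (1 / p) :=
      Real.rpow_le_rpow (Finset.sum_nonneg fun k _ =>
        Real.rpow_nonneg (abs_nonneg _) _) htail.le (by positivity)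
    have h2 : ((ε / D) ^ p : ℝ) ^ (1 / p) = ε / D := by
      rw [one_div, Real.rpow_rpow_inv (by positivity) hp0.ne']
    calc ‖∑ k ∈ t, (m k * ψ k f) • φ k‖
        ≤ C * B₂ * (∑ k ∈ t, |ψ k f| ^ p) ^ (1 / p) := key f t
      _ ≤ C * B₂ * (ε / D) := by
          rw [← h2]; exact mul_le_mul_of_nonneg_left h1 (by positivity)
      _ < D * (ε / D) := by
          refine mul_lt_mul_of_pos_right ?_ (by positivity)
          simp [hD]
      _ = ε := by field_simp
  -- Norm bound on the sum.
  have hbound : ∀ f : X₁, ‖∑' k, (m k * ψ k f) • φ k‖ ≤ B₁ * B₂ * C * ‖f‖ := by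
    intro f
    obtain ⟨s, hs, hsle⟩ := hbesselψ f
    have hhs := (hsum f).hasSum
    have htend : Filter.Tendsto (fun F : Finset ℕ => ‖∑ k ∈ F, (m k * ψ k f) • φ k‖)
        Filter.atTop (nhds ‖∑' k, (m k * ψ k f) • φ k‖) :=
      (continuous_norm.tendsto _).comp hhs
    refine le_of_tendsto htend (Filter.Eventually.of_forall fun F => ?_)
    have h1 : (∑ k ∈ F, |ψ k f| ^ p) ^ (1 / p) ≤ s ^ (1 / p) :=
      Real.rpow_le_rpow (Finset.sum_nonneg fun k _ => Real.rpow_nonneg (abs_nonneg _) _)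
        (sum_le_hasSum F (fun k _ => Real.rpow_nonneg (abs_nonneg _) _) hs) (by positivity)
    calc ‖∑ k ∈ F, (m k * ψ k f) • φ k‖
        ≤ C * B₂ * (∑ k ∈ F, |ψ k f| ^ p) ^ (1 / p) := key f F
      _ ≤ C * B₂ * (B₁ * ‖f‖) :=
          mul_le_mul_of_nonneg_left (h1.trans hsle) (by positivity)
      _ = B₁ * B₂ * C * ‖f‖ := by ring
  -- The linear map.
  let T : X₁ →ₗ[ℝ] X₂ :=
    { toFun := fun f => ∑' k, (m k * ψ k f) • φ k
      map_add' := by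
        intro f g
        have h1 := (hsum f).hasSum
        have h2 := (hsum g).hasSum
        have h3 : HasSum (fun k => (m k * ψ k (f + g)) • φ k)
            ((∑' k, (m k * ψ k f) • φ k) + ∑' k, (m k * ψ k g) • φ k) := by
          have := h1.add h2
          convert this using 2 with k
          rw [map_add]
          rw [mul_add, add_smul]
        exact h3.tsum_eq
      map_smul' := by
        intro c f
        have h1 := (hsum f).hasSum
        have h3 : HasSum (fun k => (m k * ψ k (c • f)) • φ k)
            (c • ∑' k, (m k * ψ k f) • φ k) := by
          have := h1.const_smul c
          convert this using 2 with k
          rw [map_smul, smul_eq_mul, smul_smul]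
          ring_nf
        exact h3.tsum_eq }
  refine ⟨T.mkContinuous (B₁ * B₂ * C) hbound, fun f => (hsum f).hasSum, ?_⟩
  exact LinearMap.mkContinuous_norm_le T (by positivity) hbound
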